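/- Let M be the nested matroid on a finite set U defined by a partition P = (P_1,…,P_r) of U with |P_i| = n for all i and nonnegative integer thresholds τ_1,…,τ_r, whose independent sets are the I ⊆ U with Σ_{s=t}^{r} |I ∩ P_s| ≤ Σ_{s=t}^{r} τ_s for all 1 ≤ t ≤ r. For any S ⊆ U with signature x (x_i = |S ∩ P_i|), the rank of S in M—the maximum cardinality of an independent subset of S—equals rk_M(S) = |S| − max(0, max_{1 ≤ a ≤ r} ℓ_a(x)), where ℓ_t(x) = Σ_{s=t}^{r} (x_s − τ_s). -/

import Mathlib

/-- Independence in the nested matroid defined by a partition `Q 1, …, Q m` and integer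
thresholds `σ 1, …, σ m`: a set `I` is independent iff
`Σ_{s=t}^m |I ∩ Q s| ≤ Σ_{s=t}^m σ s` for all `1 ≤ t ≤ m`. -/
def NIndep {α : Type*} [DecidableEq α] (m : ℕ) (Q : ℕ → Finset α) (σ : ℕ → ℤ)
    (I : Finset α) : Prop :=
  ∀ t ∈ Finset.Icc 1 m,
    (∑ s ∈ Finset.Icc t m, ((I ∩ Q s).card : ℤ)) ≤ ∑ s ∈ Finset.Icc t m, σ s

/-- The rank of `S` with respect to an independence predicate: the maximum cardinality of
an independent subset of `S`. -/
noncomputable def nrank {α : Type*} (pred : Finset α → Prop) (S : Finset α) : ℕ :=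
  sSup {c : ℕ | ∃ I : Finset α, I ⊆ S ∧ pred I ∧ I.card = c}

/-- `B` is a base (maximal independent set) for the independence predicate `pred`. -/
def IsNBase {α : Type*} (pred : Finset α → Prop) (B : Finset α) : Prop :=
  pred B ∧ ∀ B' : Finset α, pred B' → B ⊆ B' → B' = B

/-- Telescoping sum over an `Icc` interval of naturals. -/
lemma telescope_Icc (g : ℕ → ℤ) (t m : ℕ) (h : t ≤ m + 1) :
    ∑ s ∈ Finset.Icc t m, (g s - g (s + 1)) = g t - g (m + 1) := by
  rw [← Finset.Ico_add_one_right_eq_Icc]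
  have h0 : ∀ k, ∑ s ∈ Finset.Ico 0 k, (g s - g (s + 1)) = g 0 - g k := by
    intro k
    rw [← Finset.range_eq_Ico]
    induction k with
    | zero => simp
    | succ k ih => rw [Finset.sum_range_succ, ih]; ring
  have hc := Finset.sum_Ico_consecutive (fun s => g s - g (s + 1)) (Nat.zero_le t) h
  have h1 := h0 t
  have h2 := h0 (m + 1)
  linarith

/-- Construction of the signature of a maximum independent subset: the greedy
"keep as much as possible" vector `y`. -/
lemma exists_greedy_signature (r : ℕ) (x τ : ℕ → ℤ)
    (hx : ∀ s ∈ Finset.Icc 1 r, 0 ≤ x s) (hτ : ∀ s ∈ Finset.Icc 1 r, 0 ≤ τ s) :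
    ∃ y : ℕ → ℤ,
      (∀ s ∈ Finset.Icc 1 r, 0 ≤ y s ∧ y s ≤ x s) ∧
      (∀ t ∈ Finset.Icc 1 r, ∑ s ∈ Finset.Icc t r, y s ≤ ∑ s ∈ Finset.Icc t r, τ s) ∧
      ∑ s ∈ Finset.Icc 1 r, y s
        = ∑ s ∈ Finset.Icc 1 r, x s
          - (Finset.Icc 1 r).fold max 0 (fun a => ∑ s ∈ Finset.Icc a r, (x s - τ s)) := by
  classical
  set ℓ : ℕ → ℤ := fun a => ∑ s ∈ Finset.Icc a r, (x s - τ s) with hℓ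
  set M : ℕ → ℤ := fun t => (Finset.Icc t r).fold max 0 ℓ with hM
  have hM1 : (Finset.Icc 1 r).fold max 0 ℓ = M 1 := by simp [hM]
  rw [hM1]
  -- basic facts about M and ℓ
  have hempty : ∀ t, r < t → Finset.Icc t r = ∅ := fun t ht =>
    Finset.Icc_eq_empty (by omega)
  have hM0 : ∀ t, r < t → M t = 0 := by
    intro t ht; simp [hM, hempty t ht]
  have hℓ0 : ∀ t, r < t → ℓ t = 0 := by
    intro t ht; simp [hℓ, hempty t ht]
  have hins : ∀ t, t ≤ r → Finset.Icc t r = insert t (Finset.Icc (t + 1) r) := by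
    intro t ht
    rw [Finset.Icc_add_one_left_eq_Ioc, Finset.Ioc_insert_left ht]
  have hrec : ∀ t, t ≤ r → M t = max (ℓ t) (M (t + 1)) := by
    intro t ht
    have hnot : t ∉ Finset.Icc (t + 1) r := by simp
    simp only [hM]
    rw [hins t ht, Finset.fold_insert hnot]
  have hℓrec : ∀ t, t ≤ r → ℓ t = (x t - τ t) + ℓ (t + 1) := by
    intro t ht
    have hnot : t ∉ Finset.Icc (t + 1) r := by simp
    simp only [hℓ]
    rw [hins t ht, Finset.sum_insert hnot]
  have hℓle : ∀ t, ℓ t ≤ M t := by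
    intro t
    rcases le_or_gt t r with ht | ht
    · exact (Finset.le_fold_max _).mpr (Or.inr ⟨t, Finset.mem_Icc.mpr ⟨le_rfl, ht⟩, le_rfl⟩)
    · rw [hℓ0 t ht, hM0 t ht]
  have hmono : ∀ t, t ≤ r → M (t + 1) ≤ M t := by
    intro t ht; rw [hrec t ht]; exact le_max_right _ _
  have hstep : ∀ t ∈ Finset.Icc 1 r, M t - M (t + 1) ≤ x t := by
    intro t ht
    rw [Finset.mem_Icc] at ht
    have h1 := hℓrec t ht.2
    have h2 := hℓle (t + 1)
    have h3 := hτ t (Finset.mem_Icc.mpr ht)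
    have h4 := hx t (Finset.mem_Icc.mpr ht)
    rw [hrec t ht.2]
    rcases max_cases (ℓ t) (M (t + 1)) with ⟨he, _⟩ | ⟨he, _⟩ <;> rw [he] <;> linarith
  -- the greedy vector
  refine ⟨fun s => x s - (M s - M (s + 1)), ?_, ?_, ?_⟩
  · intro s hs
    have h1 := hstep s hs
    rw [Finset.mem_Icc] at hs
    have h2 := hmono s hs.2
    exact ⟨by dsimp only; linarith, by dsimp only; linarith⟩
  · intro t ht
    rw [Finset.mem_Icc] at ht
    have htel : ∑ s ∈ Finset.Icc t r, (M s - M (s + 1)) = M t - M (r + 1) :=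
      telescope_Icc M t r (by omega)
    have hMr : M (r + 1) = 0 := hM0 (r + 1) (by omega)
    have hsplit : ∑ s ∈ Finset.Icc t r, (x s - (M s - M (s + 1)))
        = ∑ s ∈ Finset.Icc t r, x s - ∑ s ∈ Finset.Icc t r, (M s - M (s + 1)) :=
      Finset.sum_sub_distrib _ _
    have hℓt : ℓ t = ∑ s ∈ Finset.Icc t r, x s - ∑ s ∈ Finset.Icc t r, τ s := by
      simp only [hℓ]; exact Finset.sum_sub_distrib _ _
    have := hℓle t
    rw [hsplit, htel, hMr]
    linarith
  · have htel : ∑ s ∈ Finset.Icc 1 r, (M s - M (s + 1)) = M 1 - M (r + 1) :=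
      telescope_Icc M 1 r (by omega)
    have hMr : M (r + 1) = 0 := hM0 (r + 1) (by omega)
    have hsplit : ∑ s ∈ Finset.Icc 1 r, (x s - (M s - M (s + 1)))
        = ∑ s ∈ Finset.Icc 1 r, x s - ∑ s ∈ Finset.Icc 1 r, (M s - M (s + 1)) :=
      Finset.sum_sub_distrib _ _
    rw [hsplit, htel, hMr]
    ring

/-- The rank of a set `S` in the nested matroid defined by a partition
`P 1, …, P r` (parts of size `n`) and nonnegative thresholds `τ` equals
`|S| − max(0, max_{1 ≤ a ≤ r} ℓ_a(x))`, where `x` is the signature of `S` and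
`ℓ_t(x) = Σ_{s=t}^r (x_s − τ_s)`. -/
theorem nested_matroid_rank
    {α : Type*} [Fintype α] [DecidableEq α]
    (r n : ℕ) (hr : 1 ≤ r)
    (P : ℕ → Finset α) (τ : ℕ → ℤ)
    (hτ : ∀ i ∈ Finset.Icc 1 r, 0 ≤ τ i)
    (hdisj : ∀ i ∈ Finset.Icc 1 r, ∀ j ∈ Finset.Icc 1 r, i ≠ j → Disjoint (P i) (P j))
    (hcover : ∀ a : α, ∃ i ∈ Finset.Icc 1 r, a ∈ P i)
    (hcard : ∀ i ∈ Finset.Icc 1 r, (P i).card = n)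
    (S : Finset α) :
    (nrank (NIndep r P τ) S : ℤ)
      = (S.card : ℤ)
        - (Finset.Icc 1 r).fold max 0
            (fun a => ∑ s ∈ Finset.Icc a r, (((S ∩ P s).card : ℤ) - τ s)) := by
  classical
  set ℓ : ℕ → ℤ := fun a => ∑ s ∈ Finset.Icc a r, (((S ∩ P s).card : ℤ) - τ s) with hℓ
  set L : ℤ := (Finset.Icc 1 r).fold max 0 ℓ with hLdef
  -- decomposition of cardinalities along the partition
  have hdecomp : ∀ T : Finset α, T.card = ∑ s ∈ Finset.Icc 1 r, (T ∩ P s).card := by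
    intro T
    have hT : T = (Finset.Icc 1 r).biUnion (fun s => T ∩ P s) := by
      ext a
      simp only [Finset.mem_biUnion, Finset.mem_inter]
      constructor
      · intro ha
        obtain ⟨i, hi, hPi⟩ := hcover a
        exact ⟨i, hi, ha, hPi⟩
      · rintro ⟨i, -, ha, -⟩
        exact ha
    conv_lhs => rw [hT]
    refine Finset.card_biUnion ?_
    intro i hi j hj hij
    exact (hdisj i hi j hj hij).mono Finset.inter_subset_right Finset.inter_subset_right
  -- upper bound for independent subsets
  have hub : ∀ I : Finset α, I ⊆ S → NIndep r P τ I → (I.card : ℤ) ≤ (S.card : ℤ) - L := by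
    intro I hIS hInd
    have hL : L ≤ (S.card : ℤ) - (I.card : ℤ) := by
      rw [hLdef]
      refine (Finset.fold_max_le _).mpr ⟨?_, ?_⟩
      · have := Finset.card_le_card hIS
        have : (I.card : ℤ) ≤ (S.card : ℤ) := by exact_mod_cast this
        linarith
      · intro a ha
        rw [Finset.mem_Icc] at ha
        have e1 : (I.card : ℤ) = ∑ s ∈ Finset.Icc 1 r, ((I ∩ P s).card : ℤ) := by
          rw [hdecomp I]; push_cast; ring
        have e2 : (S.card : ℤ) = ∑ s ∈ Finset.Icc 1 r, ((S ∩ P s).card : ℤ) := by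
          rw [hdecomp S]; push_cast; ring
        have e3 : ∀ f : ℕ → ℤ, ∑ s ∈ Finset.Ico 1 a, f s + ∑ s ∈ Finset.Icc a r, f s
            = ∑ s ∈ Finset.Icc 1 r, f s := by
          intro f
          rw [← Finset.Ico_add_one_right_eq_Icc, ← Finset.Ico_add_one_right_eq_Icc]
          exact Finset.sum_Ico_consecutive f ha.1 (by omega)
        have e5 : ∑ s ∈ Finset.Icc a r, ((I ∩ P s).card : ℤ)
            ≤ ∑ s ∈ Finset.Icc a r, τ s := hInd a (Finset.mem_Icc.mpr ha)
        have e6 : ∑ s ∈ Finset.Ico 1 a, ((I ∩ P s).card : ℤ)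
            ≤ ∑ s ∈ Finset.Ico 1 a, ((S ∩ P s).card : ℤ) := by
          refine Finset.sum_le_sum ?_
          intro s _
          have : (I ∩ P s).card ≤ (S ∩ P s).card :=
            Finset.card_le_card (Finset.inter_subset_inter_right hIS)
          exact_mod_cast this
        have e7 : ℓ a = ∑ s ∈ Finset.Icc a r, ((S ∩ P s).card : ℤ)
            - ∑ s ∈ Finset.Icc a r, τ s := by
          simp only [hℓ]; exact Finset.sum_sub_distrib _ _
        have e3I := e3 (fun s => ((I ∩ P s).card : ℤ))
        have e3S := e3 (fun s => ((S ∩ P s).card : ℤ))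
        rw [e7]
        linarith
    linarith
  -- construction of a maximum independent subset
  obtain ⟨y, hy1, hy2, hy3⟩ := exists_greedy_signature r (fun s => ((S ∩ P s).card : ℤ)) τ
    (fun s _ => Int.natCast_nonneg _) hτ
  have hchoose : ∀ s : ℕ, ∃ T : Finset α, T ⊆ S ∩ P s ∧
      (s ∈ Finset.Icc 1 r → T.card = (y s).toNat) := by
    intro s
    by_cases hs : s ∈ Finset.Icc 1 r
    · obtain ⟨T, hT, hTc⟩ := Finset.exists_subset_card_eq
        (Int.toNat_le.mpr (by exact_mod_cast (hy1 s hs).2))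
      exact ⟨T, hT, fun _ => hTc⟩
    · exact ⟨∅, Finset.empty_subset _, fun h => absurd h hs⟩
  choose T hTsub hTcard using hchoose
  set I : Finset α := (Finset.Icc 1 r).biUnion T with hI
  have hIS : I ⊆ S := by
    rw [hI]
    refine Finset.biUnion_subset.mpr ?_
    intro s _
    exact (hTsub s).trans Finset.inter_subset_left
  have hIint : ∀ s ∈ Finset.Icc 1 r, I ∩ P s = T s := by
    intro s hs
    ext a
    simp only [hI, Finset.mem_inter, Finset.mem_biUnion]
    constructor
    · rintro ⟨⟨u, hu, hau⟩, haP⟩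
      rcases eq_or_ne u s with rfl | hus
      · exact hau
      · have h1 : a ∈ P u := (Finset.mem_inter.mp (hTsub u hau)).2
        exact absurd haP (Finset.disjoint_left.mp (hdisj u hu s hs hus) h1)
    · intro ha
      exact ⟨⟨s, hs, ha⟩, (Finset.mem_inter.mp (hTsub s ha)).2⟩
  have hIcast : ∀ s ∈ Finset.Icc 1 r, ((I ∩ P s).card : ℤ) = y s := by
    intro s hs
    rw [hIint s hs, hTcard s hs, Int.toNat_of_nonneg (hy1 s hs).1]
  have hInd : NIndep r P τ I := by
    intro t ht
    rw [Finset.mem_Icc] at ht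
    have : ∑ s ∈ Finset.Icc t r, ((I ∩ P s).card : ℤ) = ∑ s ∈ Finset.Icc t r, y s := by
      refine Finset.sum_congr rfl ?_
      intro s hs
      rw [Finset.mem_Icc] at hs
      exact hIcast s (Finset.mem_Icc.mpr ⟨le_trans ht.1 hs.1, hs.2⟩)
    rw [this]
    exact hy2 t (Finset.mem_Icc.mpr ht)
  have hIcard : (I.card : ℤ) = (S.card : ℤ) - L := by
    have e1 : (I.card : ℤ) = ∑ s ∈ Finset.Icc 1 r, ((I ∩ P s).card : ℤ) := by
      rw [hdecomp I]; push_cast; ring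
    have e2 : (S.card : ℤ) = ∑ s ∈ Finset.Icc 1 r, ((S ∩ P s).card : ℤ) := by
      rw [hdecomp S]; push_cast; ring
    have e3 : ∑ s ∈ Finset.Icc 1 r, ((I ∩ P s).card : ℤ)
        = ∑ s ∈ Finset.Icc 1 r, y s := Finset.sum_congr rfl hIcast
    rw [e1, e3, hy3, ← e2, ← hℓ, ← hLdef]
  -- compute the rank
  have hrank : nrank (NIndep r P τ) S = I.card := by
    have hmem : I.card ∈ {c : ℕ | ∃ J : Finset α, J ⊆ S ∧ NIndep r P τ J ∧ J.card = c} :=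
      ⟨I, hIS, hInd, rfl⟩
    have hbdd : ∀ c ∈ {c : ℕ | ∃ J : Finset α, J ⊆ S ∧ NIndep r P τ J ∧ J.card = c},
        c ≤ I.card := by
      rintro c ⟨J, hJS, hJind, rfl⟩
      have := hub J hJS hJind
      have : (J.card : ℤ) ≤ (I.card : ℤ) := by rw [hIcard]; linarith
      exact_mod_cast this
    refine le_antisymm (csSup_le ⟨I.card, hmem⟩ hbdd) (le_csSup ⟨I.card, hbdd⟩ hmem)
  rw [hrank]
  exact hIcard
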